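/- Let d ∈ ℕ, σ > 0, x̂, r : Fin d → ℝ, and t ∈ ℝ. Let μ₀ := Measure.pi (fun i => ProbabilityTheory.gaussianReal (x̂ i) (σ²)) and μ₁ := Measure.pi (fun i => ProbabilityTheory.gaussianReal (x̂ i − r i) (σ²)). Then β₂*(1 − Φ(t); μ₀, μ₁) = Φ(t − ‖r‖₂ / σ), where ‖r‖₂ = √(∑ i, (r i)²). -/

import Mathlib

open MeasureTheory
open scoped ENNReal NNReal

/-- The optimal type-II error at type-I level `α` for testing the null `μ₀`
against the alternative `μ₁`. -/
noncomputable def beta2Star {Ω : Type*} [MeasurableSpace Ω]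
    (α : ℝ) (μ₀ μ₁ : Measure Ω) : ℝ :=
  ⨅ φ : {φ : Ω → ℝ // Measurable φ ∧ (∀ x, 0 ≤ φ x ∧ φ x ≤ 1) ∧ ∫ x, φ x ∂μ₀ ≤ α},
    ∫ x, (1 - φ.1 x) ∂μ₁

/-- The standard normal CDF. -/
noncomputable def stdNormalCDF (t : ℝ) : ℝ :=
  ((ProbabilityTheory.gaussianReal 0 1) (Set.Iic t)).toReal

open ProbabilityTheory Real

lemma gaussianReal_eq_map (m : ℝ) (v : ℝ≥0) :
    gaussianReal m v = (gaussianReal 0 1).map (fun x => Real.sqrt v * x + m) := by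
  have h1 : (gaussianReal 0 1).map (fun x => Real.sqrt v * x) = gaussianReal 0 v := by
    rw [gaussianReal_map_const_mul]
    congr
    · ring
    · ext
      simp [Real.sq_sqrt v.2]
  have h2 : ((gaussianReal 0 1).map (fun x => Real.sqrt v * x)).map (fun x => x + m)
      = gaussianReal m v := by
    rw [h1, gaussianReal_map_add_const]
    congr 1
    ring
  rw [← h2, Measure.map_map (by fun_prop) (by fun_prop)]
  rfl

lemma gaussianReal_Iic (m : ℝ) {v : ℝ≥0} (hv : 0 < (v : ℝ)) (c : ℝ) :
    ((gaussianReal m v) (Set.Iic c)).toReal = stdNormalCDF ((c - m) / Real.sqrt v) := by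
  have hs : (0:ℝ) < Real.sqrt v := Real.sqrt_pos.2 hv
  rw [gaussianReal_eq_map m v, Measure.map_apply (by fun_prop) measurableSet_Iic]
  have : (fun x => Real.sqrt v * x + m) ⁻¹' (Set.Iic c) = Set.Iic ((c - m) / Real.sqrt v) := by
    ext x
    simp only [Set.mem_preimage, Set.mem_Iic]
    rw [le_div_iff₀ hs]
    constructor <;> intro h <;> nlinarith
  rw [this]
  rfl

lemma stdNormalCDF_neg (t : ℝ) : stdNormalCDF (-t) = 1 - stdNormalCDF t := by
  have hmap : (gaussianReal 0 1).map (fun x => (-1 : ℝ) * x) = gaussianReal 0 1 := by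
    rw [gaussianReal_map_const_mul]
    congr
    · ring
    · ext; norm_num
  have h1 : (gaussianReal (0:ℝ) 1) (Set.Iic (-t)) = (gaussianReal 0 1) (Set.Ici t) := by
    conv_lhs => rw [← hmap]
    rw [Measure.map_apply (by fun_prop) measurableSet_Iic]
    congr 1
    ext x
    simp only [Set.mem_preimage, Set.mem_Iic, Set.mem_Ici]
    constructor <;> intro h <;> linarith
  have hIio : (gaussianReal (0:ℝ) 1) (Set.Iio t) = (gaussianReal 0 1) (Set.Iic t) := by
    have hsing : (gaussianReal (0:ℝ) 1) {t} = 0 :=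
      gaussianReal_absolutelyContinuous 0 one_ne_zero (measure_singleton t)
    rw [← Set.Iio_union_right, measure_union (by simp) (measurableSet_singleton t), hsing,
      add_zero]
  have h2 : (gaussianReal (0:ℝ) 1) (Set.Ici t) = 1 - (gaussianReal 0 1) (Set.Iio t) := by
    rw [← Set.compl_Iio, prob_compl_eq_one_sub measurableSet_Iio]
  rw [stdNormalCDF, stdNormalCDF, h1, h2, hIio, ENNReal.toReal_sub_of_le prob_le_one (by simp)]
  simp

lemma stdNormalCDF_nonneg (t : ℝ) : 0 ≤ stdNormalCDF t := ENNReal.toReal_nonneg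

lemma stdNormalCDF_le_one (t : ℝ) : stdNormalCDF t ≤ 1 := by
  rw [stdNormalCDF]
  exact ENNReal.toReal_le_of_le_ofReal zero_le_one (by simpa using prob_le_one)

lemma lintegral_fin_prod_eq_prod {n : ℕ} (μ : Fin n → Measure ℝ) [∀ i, SigmaFinite (μ i)]
    (f : Fin n → ℝ → ℝ≥0∞) (hf : ∀ i, Measurable (f i)) :
    ∫⁻ x : Fin n → ℝ, ∏ i, f i (x i) ∂(Measure.pi μ) = ∏ i, ∫⁻ x, f i x ∂(μ i) := by
  induction n with
  | zero => simp [Measure.pi_of_empty]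
  | succ n ih =>
      have h := (measurePreserving_piFinSuccAbove μ 0).symm
      rw [← h.map_eq, lintegral_map (by fun_prop) (MeasurableEquiv.measurable _)]
      simp_rw [MeasurableEquiv.piFinSuccAbove_symm_apply, Fin.insertNthEquiv,
        Fin.insertNth_zero, Equiv.coe_fn_mk, Fin.prod_univ_succ, Fin.cons_zero, Fin.cons_succ,
        Fin.zero_succAbove, cast_eq]
      rw [lintegral_prod_mul (f := f 0) (g := fun y : Fin n → ℝ => ∏ i, f i.succ (y i))
        ((hf 0).aemeasurable)
        ((Finset.measurable_prod Finset.univ (fun i _ => (hf i.succ).comp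
          (measurable_pi_apply i))).aemeasurable)]
      rw [ih _ _ (fun i => hf _)]

lemma pi_withDensity {n : ℕ} (μ : Fin n → Measure ℝ) [∀ i, SigmaFinite (μ i)]
    (f : Fin n → ℝ → ℝ≥0∞) (hf : ∀ i, Measurable (f i))
    [∀ i, SigmaFinite ((μ i).withDensity (f i))] :
    Measure.pi (fun i => (μ i).withDensity (f i))
      = (Measure.pi μ).withDensity (fun x => ∏ i, f i (x i)) := by
  refine Measure.pi_eq (fun s hs => ?_)
  rw [withDensity_apply _ (MeasurableSet.univ_pi hs)]
  have : ∀ x : Fin n → ℝ, (Set.pi Set.univ s).indicator (fun x => ∏ i, f i (x i)) x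
      = ∏ i, (s i).indicator (f i) (x i) := by
    intro x
    by_cases hx : x ∈ Set.pi Set.univ s
    · rw [Set.indicator_of_mem hx]
      exact Finset.prod_congr rfl fun i _ =>
        (Set.indicator_of_mem (hx i (Set.mem_univ i)) _).symm
    · rw [Set.indicator_of_notMem hx]
      rw [Set.mem_univ_pi] at hx
      push_neg at hx
      obtain ⟨i, hi⟩ := hx
      exact (Finset.prod_eq_zero (Finset.mem_univ i)
        (Set.indicator_of_notMem hi _)).symm
  rw [← lintegral_indicator (MeasurableSet.univ_pi hs)]
  simp_rw [this]
  rw [lintegral_fin_prod_eq_prod μ _ (fun i => (hf i).indicator (hs i))]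
  exact Finset.prod_congr rfl fun i _ => by
    rw [lintegral_indicator (hs i), withDensity_apply _ (hs i)]

lemma gaussianPDFReal_conv_aux (m₁ m₂ : ℝ) {v₁ v₂ : ℝ≥0} (hv₁ : v₁ ≠ 0) (hv₂ : v₂ ≠ 0)
    (z x : ℝ) :
    gaussianPDFReal m₁ v₁ x * gaussianPDFReal (m₂ + x) v₂ z
      = gaussianPDFReal (m₁ + m₂) (v₁ + v₂) z
        * gaussianPDFReal ((m₁ * v₂ + (z - m₂) * v₁) / (v₁ + v₂)) (v₁ * v₂ / (v₁ + v₂)) x := by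
  have h1 : (0:ℝ) < v₁ := lt_of_le_of_ne v₁.2 (by exact_mod_cast (Ne.symm hv₁))
  have h2 : (0:ℝ) < v₂ := lt_of_le_of_ne v₂.2 (by exact_mod_cast (Ne.symm hv₂))
  have h12 : (0:ℝ) < (v₁:ℝ) + v₂ := by linarith
  have hw : ((v₁ * v₂ / (v₁ + v₂) : ℝ≥0) : ℝ) = (v₁:ℝ) * v₂ / ((v₁:ℝ) + v₂) := by
    push_cast; ring
  have hsum : (((v₁ + v₂ : ℝ≥0)) : ℝ) = (v₁:ℝ) + v₂ := by push_cast; ring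
  simp only [gaussianPDFReal, hw, hsum]
  rw [mul_mul_mul_comm, mul_mul_mul_comm ((Real.sqrt (2*π*((v₁:ℝ)+v₂)))⁻¹)]
  congr 1
  · rw [← mul_inv, ← mul_inv, ← Real.sqrt_mul (by positivity), ← Real.sqrt_mul (by positivity)]
    congr 2
    field_simp
  · rw [← Real.exp_add, ← Real.exp_add]
    congr 1
    field_simp
    ring

lemma gaussianReal_conv (m₁ m₂ : ℝ) (v₁ v₂ : ℝ≥0) :
    ((gaussianReal m₁ v₁).prod (gaussianReal m₂ v₂)).map (fun p : ℝ × ℝ => p.1 + p.2)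
      = gaussianReal (m₁ + m₂) (v₁ + v₂) := by
  by_cases hv₁ : v₁ = 0
  · subst hv₁
    rw [gaussianReal_zero_var, Measure.dirac_prod,
      Measure.map_map (by fun_prop) (by fun_prop)]
    have : ((fun p : ℝ × ℝ => p.1 + p.2) ∘ Prod.mk m₁) = (fun x => m₁ + x) := rfl
    rw [this, gaussianReal_map_const_add, zero_add, add_comm m₂ m₁]
  by_cases hv₂ : v₂ = 0
  · subst hv₂
    rw [gaussianReal_zero_var, Measure.prod_dirac,
      Measure.map_map (by fun_prop) (by fun_prop)]
    have : ((fun p : ℝ × ℝ => p.1 + p.2) ∘ (fun x => (x, m₂))) = (fun x => x + m₂) := rfl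
    rw [this, gaussianReal_map_add_const, add_zero]
  -- main case
  have hv₁₂ : v₁ + v₂ ≠ 0 := by simp [hv₁]
  have hw : v₁ * v₂ / (v₁ + v₂) ≠ 0 := by
    simp only [ne_eq, div_eq_zero_iff, mul_eq_zero]
    push_neg
    exact ⟨⟨hv₁, hv₂⟩, hv₁₂⟩
  ext s hs
  rw [Measure.map_apply measurable_add hs, Measure.prod_apply (measurable_add hs)]
  have hpdfm : Measurable (fun p : ℝ × ℝ => gaussianPDF (m₂ + p.1) v₂ p.2) := by
    apply Measurable.ennreal_ofReal
    simp only [gaussianPDFReal]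
    fun_prop
  have hfib : ∀ x : ℝ, (gaussianReal m₂ v₂) (Prod.mk x ⁻¹' ((fun p : ℝ × ℝ => p.1 + p.2) ⁻¹' s))
      = ∫⁻ z, s.indicator (gaussianPDF (m₂ + x) v₂) z := by
    intro x
    have : Prod.mk x ⁻¹' ((fun p : ℝ × ℝ => p.1 + p.2) ⁻¹' s) = (fun y => x + y) ⁻¹' s := rfl
    rw [this, ← Measure.map_apply (by fun_prop) hs, gaussianReal_map_const_add,
      gaussianReal_apply _ (by simpa using hv₂), lintegral_indicator hs, add_comm m₂ x]
  simp_rw [hfib]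
  have hunc : Measurable (Function.uncurry fun x z : ℝ =>
      s.indicator (gaussianPDF (m₂ + x) v₂) z) := by
    have heq : (Function.uncurry fun x z : ℝ => s.indicator (gaussianPDF (m₂ + x) v₂) z)
        = (Prod.snd ⁻¹' s).indicator (fun p : ℝ × ℝ => gaussianPDF (m₂ + p.1) v₂ p.2) := by
      ext p
      show s.indicator (gaussianPDF (m₂ + p.1) v₂) p.2 = _
      by_cases hp : p.2 ∈ s
      · rw [Set.indicator_of_mem hp, Set.indicator_of_mem (by exact hp)]
      · rw [Set.indicator_of_notMem hp, Set.indicator_of_notMem (by exact hp)]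
    rw [heq]
    exact hpdfm.indicator (measurable_snd hs)
  have hmeas : Measurable fun x : ℝ => ∫⁻ z, s.indicator (gaussianPDF (m₂ + x) v₂) z :=
    hunc.lintegral_prod_right'
  rw [gaussianReal_of_var_ne_zero _ hv₁,
    lintegral_withDensity_eq_lintegral_mul _ (measurable_gaussianPDF _ _) hmeas]
  simp only [Pi.mul_apply]
  have hpull : ∀ x : ℝ, gaussianPDF m₁ v₁ x * ∫⁻ z, s.indicator (gaussianPDF (m₂ + x) v₂) z
      = ∫⁻ z, gaussianPDF m₁ v₁ x * s.indicator (gaussianPDF (m₂ + x) v₂) z := by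
    intro x
    rw [lintegral_const_mul _ ((measurable_gaussianPDF _ _).indicator hs)]
  simp_rw [hpull]
  rw [lintegral_lintegral_swap (((measurable_gaussianPDF m₁ v₁).comp
    measurable_fst).mul hunc).aemeasurable]
  have hinner : ∀ z : ℝ, ∫⁻ x, gaussianPDF m₁ v₁ x * s.indicator (gaussianPDF (m₂ + x) v₂) z
      = s.indicator (gaussianPDF (m₁ + m₂) (v₁ + v₂)) z := by
    intro z
    by_cases hz : z ∈ s
    · simp only [Set.indicator_of_mem hz]
      have key : ∀ x : ℝ, gaussianPDF m₁ v₁ x * gaussianPDF (m₂ + x) v₂ z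
          = ENNReal.ofReal (gaussianPDFReal (m₁ + m₂) (v₁ + v₂) z)
            * ENNReal.ofReal (gaussianPDFReal ((m₁ * v₂ + (z - m₂) * v₁) / (v₁ + v₂))
                (v₁ * v₂ / (v₁ + v₂)) x) := by
        intro x
        rw [gaussianPDF, gaussianPDF, ← ENNReal.ofReal_mul (gaussianPDFReal_nonneg _ _ _),
          gaussianPDFReal_conv_aux m₁ m₂ hv₁ hv₂ z x,
          ENNReal.ofReal_mul (gaussianPDFReal_nonneg _ _ _)]
      simp_rw [key]
      rw [lintegral_const_mul _ (measurable_gaussianPDFReal _ _).ennreal_ofReal,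
        lintegral_gaussianPDFReal_eq_one _ hw, mul_one]
      rfl
    · simp only [Set.indicator_of_notMem hz, mul_zero, lintegral_zero]
  simp_rw [hinner]
  rw [lintegral_indicator hs, ← gaussianReal_apply _ hv₁₂]

noncomputable def sqNN (c : ℝ) : ℝ≥0 := ⟨c^2, sq_nonneg c⟩

lemma pi_gaussian_map_sum {d : ℕ} (v : ℝ≥0) (m a : Fin d → ℝ) :
    (Measure.pi fun i => gaussianReal (m i) v).map (fun x => ∑ i, a i * x i)
      = gaussianReal (∑ i, a i * m i) (∑ i, sqNN (a i) * v) := by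
  induction d with
  | zero =>
      simp only [Finset.univ_eq_empty, Finset.sum_empty]
      rw [show (fun x : Fin 0 → ℝ => (0:ℝ)) = fun _ => (0:ℝ) from rfl,
        Measure.map_const, measure_univ, one_smul, gaussianReal_zero_var]
  | succ n ih =>
      have h := (measurePreserving_piFinSuccAbove (fun i => gaussianReal (m i) v) 0).symm
      have hT : Measurable (fun x : Fin (n+1) → ℝ => ∑ i, a i * x i) :=
        Finset.measurable_sum _ (fun i _ => (measurable_pi_apply i).const_mul _)
      have hS : Measurable (fun y : Fin n → ℝ => ∑ j : Fin n, a j.succ * y j) :=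
        Finset.measurable_sum _ (fun i _ => (measurable_pi_apply i).const_mul _)
      rw [← h.map_eq, Measure.map_map hT (MeasurableEquiv.measurable _)]
      have hcomp : ((fun x : Fin (n+1) → ℝ => ∑ i, a i * x i)
          ∘ (MeasurableEquiv.piFinSuccAbove (fun _ => ℝ) 0).symm)
          = fun p : ℝ × (Fin n → ℝ) => (a 0 * p.1) + (∑ j : Fin n, a j.succ * p.2 j) := by
        funext p
        simp only [Function.comp_apply, MeasurableEquiv.piFinSuccAbove_symm_apply,
          Fin.insertNthEquiv, Fin.insertNth_zero, Equiv.coe_fn_mk, Fin.sum_univ_succ,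
          Fin.cons_zero, Fin.cons_succ, cast_eq]
      rw [hcomp]
      simp only [Fin.zero_succAbove]
      rw [show (fun p : ℝ × (Fin n → ℝ) => (a 0 * p.1) + (∑ j : Fin n, a j.succ * p.2 j))
          = (fun q : ℝ × ℝ => q.1 + q.2) ∘ (Prod.map (fun x : ℝ => a 0 * x)
              (fun y : Fin n → ℝ => ∑ j : Fin n, a j.succ * y j)) from rfl]
      rw [← Measure.map_map measurable_add
        (Measurable.prodMap (measurable_const_mul (a 0)) hS)]
      rw [← Measure.map_prod_map _ _ (measurable_const_mul (a 0)) hS]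
      rw [gaussianReal_map_const_mul, ih (fun j => m j.succ) (fun j => a j.succ),
        gaussianReal_conv, Fin.sum_univ_succ, Fin.sum_univ_succ]
      rfl

lemma gaussianPDFReal_ratio (m ρ : ℝ) {v : ℝ≥0} (hv : v ≠ 0) (y : ℝ) :
    gaussianPDFReal (m - ρ) v y
      = gaussianPDFReal m v y * Real.exp (((y - m)^2 - (y - m + ρ)^2) / (2 * v)) := by
  have hvpos : (0:ℝ) < v := lt_of_le_of_ne v.2 (by exact_mod_cast (Ne.symm hv))
  simp only [gaussianPDFReal]
  have key : Real.exp (-(y - m) ^ 2 / (2 * (v:ℝ)))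
      * Real.exp (((y - m)^2 - (y - m + ρ)^2) / (2 * (v:ℝ)))
      = Real.exp (-(y - (m - ρ))^2 / (2 * (v:ℝ))) := by
    rw [← Real.exp_add]
    congr 1
    field_simp
    ring
  rw [mul_assoc _ (Real.exp _) (Real.exp _), key]

lemma gaussianReal_sub_eq_withDensity (m ρ : ℝ) {v : ℝ≥0} (hv : v ≠ 0) :
    gaussianReal (m - ρ) v = (gaussianReal m v).withDensity
      (fun y => ENNReal.ofReal (Real.exp (((y - m)^2 - (y - m + ρ)^2) / (2 * (v:ℝ))))) := by
  have hm : Measurable fun y : ℝ =>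
      ENNReal.ofReal (Real.exp (((y - m)^2 - (y - m + ρ)^2) / (2 * (v:ℝ)))) := by fun_prop
  rw [gaussianReal_of_var_ne_zero _ hv, gaussianReal_of_var_ne_zero _ hv,
    ← withDensity_mul volume (measurable_gaussianPDF m v) hm]
  congr 1
  funext y
  simp only [Pi.mul_apply, gaussianPDF,
    ← ENNReal.ofReal_mul (gaussianPDFReal_nonneg m v y)]
  rw [← gaussianPDFReal_ratio m ρ hv y]

lemma beta2Star_eq {Ω : Type*} [MeasurableSpace Ω] (α b : ℝ) (μ₀ μ₁ : Measure Ω)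
    (ψ : Ω → ℝ) (hψm : Measurable ψ) (hψb : ∀ x, 0 ≤ ψ x ∧ ψ x ≤ 1)
    (hψα : ∫ x, ψ x ∂μ₀ ≤ α) (hψval : ∫ x, (1 - ψ x) ∂μ₁ = b)
    (hlb : ∀ φ : Ω → ℝ, Measurable φ → (∀ x, 0 ≤ φ x ∧ φ x ≤ 1) → ∫ x, φ x ∂μ₀ ≤ α →
      b ≤ ∫ x, (1 - φ x) ∂μ₁) :
    (⨅ φ : {φ : Ω → ℝ // Measurable φ ∧ (∀ x, 0 ≤ φ x ∧ φ x ≤ 1) ∧ ∫ x, φ x ∂μ₀ ≤ α},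
      ∫ x, (1 - φ.1 x) ∂μ₁) = b := by
  have hbdd : BddBelow (Set.range fun φ : {φ : Ω → ℝ // Measurable φ ∧
      (∀ x, 0 ≤ φ x ∧ φ x ≤ 1) ∧ ∫ x, φ x ∂μ₀ ≤ α} => ∫ x, (1 - φ.1 x) ∂μ₁) := by
    refine ⟨b, ?_⟩
    rintro y ⟨φ, rfl⟩
    exact hlb φ.1 φ.2.1 φ.2.2.1 φ.2.2.2
  haveI : Nonempty {φ : Ω → ℝ // Measurable φ ∧ (∀ x, 0 ≤ φ x ∧ φ x ≤ 1) ∧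
      ∫ x, φ x ∂μ₀ ≤ α} := ⟨⟨ψ, hψm, hψb, hψα⟩⟩
  refine le_antisymm ?_ ?_
  · exact ciInf_le_of_le hbdd ⟨ψ, hψm, hψb, hψα⟩ hψval.le
  · exact le_ciInf fun φ => hlb φ.1 φ.2.1 φ.2.2.1 φ.2.2.2

lemma integrable_of_bounded_meas {Ω : Type*} [MeasurableSpace Ω] {μ : Measure Ω}
    [IsProbabilityMeasure μ] {φ : Ω → ℝ} (hm : Measurable φ)
    (hb : ∀ x, 0 ≤ φ x ∧ φ x ≤ 1) : Integrable φ μ := by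
  refine Integrable.mono' (integrable_const 1) hm.aestronglyMeasurable ?_
  refine ae_of_all _ fun x => ?_
  rw [Real.norm_eq_abs, abs_le]
  exact ⟨by linarith [(hb x).1], (hb x).2⟩

set_option maxHeartbeats 1000000 in
/-- The optimal type-II error for testing `N(x̂, σ²I_d)` against `N(x̂ − r, σ²I_d)` at
type-I error level `1 − Φ(t)` equals `Φ(t − ‖r‖₂/σ)`. -/
theorem gaussian_optimal_type_II (d : ℕ) (σ : ℝ≥0) (hσ : 0 < σ)
    (xhat r : Fin d → ℝ) (t : ℝ) :
    beta2Star (1 - stdNormalCDF t)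
        (Measure.pi fun i => ProbabilityTheory.gaussianReal (xhat i) (σ ^ 2))
        (Measure.pi fun i => ProbabilityTheory.gaussianReal (xhat i - r i) (σ ^ 2))
      = stdNormalCDF (t - Real.sqrt (∑ i, (r i) ^ 2) / (σ : ℝ)) := by
  have hσR : (0:ℝ) < (σ:ℝ) := hσ
  have hσ2 : (σ^2 : ℝ≥0) ≠ 0 := pow_ne_zero 2 (ne_of_gt hσ)
  set μ₀ := Measure.pi fun i => gaussianReal (xhat i) (σ ^ 2) with hμ₀def
  set μ₁ := Measure.pi fun i => gaussianReal (xhat i - r i) (σ ^ 2) with hμ₁def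
  haveI hpm₀ : IsProbabilityMeasure μ₀ := by rw [hμ₀def]; infer_instance
  haveI hpm₁ : IsProbabilityMeasure μ₁ := by rw [hμ₁def]; infer_instance
  rw [beta2Star]
  by_cases h0 : ∑ i, (r i)^2 = 0
  · have hri : ∀ i, r i = 0 := by
      intro i
      have h := (Finset.sum_eq_zero_iff_of_nonneg
        (fun i _ => sq_nonneg (r i))).1 h0 i (Finset.mem_univ i)
      exact pow_eq_zero_iff two_ne_zero |>.1 h
    have hμeq : μ₁ = μ₀ := by
      rw [hμ₀def, hμ₁def]
      congr 1
      funext i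
      rw [hri i, sub_zero]
    rw [h0, Real.sqrt_zero, zero_div, sub_zero, hμeq]
    refine beta2Star_eq _ _ _ _ (fun _ => 1 - stdNormalCDF t) measurable_const
      (fun x => ⟨show (0:ℝ) ≤ 1 - stdNormalCDF t by linarith [stdNormalCDF_le_one t],
        show (1:ℝ) - stdNormalCDF t ≤ 1 by linarith [stdNormalCDF_nonneg t]⟩)
      (by rw [integral_const, probReal_univ]; simp) ?_ ?_
    · rw [integral_const, probReal_univ]; simp
    · intro φ hm hb hα
      have hint : Integrable φ μ₀ := integrable_of_bounded_meas hm hb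
      have heq : ∫ x, (1 - φ x) ∂μ₀ = 1 - ∫ x, φ x ∂μ₀ := by
        rw [integral_sub (integrable_const 1) hint, integral_const, probReal_univ]
        simp
      rw [heq]
      linarith
  · have hsumpos : 0 < ∑ i, (r i)^2 :=
      lt_of_le_of_ne (Finset.sum_nonneg fun i _ => sq_nonneg _) (Ne.symm h0)
    set nr := Real.sqrt (∑ i, (r i)^2) with hnr
    have hnrpos : 0 < nr := Real.sqrt_pos.2 hsumpos
    have hnrsq : nr^2 = ∑ i, (r i)^2 := Real.sq_sqrt hsumpos.le
    set M := ∑ i, r i * xhat i with hM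
    set c := M - t * σ * nr with hc
    set T := fun x : Fin d → ℝ => ∑ i, r i * x i with hT
    have hTm : Measurable T :=
      Finset.measurable_sum _ fun i _ => (measurable_pi_apply i).const_mul _
    set S := T ⁻¹' (Set.Iic c) with hS
    have hSm : MeasurableSet S := hTm measurableSet_Iic
    set V := ∑ i : Fin d, sqNN (r i) * σ^2 with hV
    have hVcoe : (V:ℝ) = (∑ i, (r i)^2) * (σ:ℝ)^2 := by
      rw [hV]
      rw [NNReal.coe_sum, Finset.sum_mul]
      exact Finset.sum_congr rfl fun i _ => by rw [NNReal.coe_mul, NNReal.coe_pow]; rfl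
    have hVpos : (0:ℝ) < (V:ℝ) := by rw [hVcoe]; positivity
    have hsqrtV : Real.sqrt V = nr * σ := by
      rw [hVcoe, Real.sqrt_mul hsumpos.le, Real.sqrt_sq hσR.le, hnr]
    have hmap₀ : μ₀.map T = gaussianReal M V := by
      rw [hμ₀def, hT, hM, hV]
      exact pi_gaussian_map_sum _ _ _
    have hS₀ : (μ₀ S).toReal = 1 - stdNormalCDF t := by
      rw [hS, ← Measure.map_apply hTm measurableSet_Iic, hmap₀, gaussianReal_Iic M hVpos,
        hsqrtV]
      have harg : (c - M)/(nr * σ) = -t := by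
        rw [hc]
        field_simp
        ring
      rw [harg, stdNormalCDF_neg]
    have hM₁ : ∑ i, r i * (xhat i - r i) = M - ∑ i, (r i)^2 := by
      rw [hM, ← Finset.sum_sub_distrib]
      exact Finset.sum_congr rfl fun i _ => by ring
    have hmap₁ : μ₁.map T = gaussianReal (M - ∑ i, (r i)^2) V := by
      rw [hμ₁def, hT, hV, pi_gaussian_map_sum, hM₁]
    have hS₁ : (μ₁ S).toReal = stdNormalCDF (nr/σ - t) := by
      rw [hS, ← Measure.map_apply hTm measurableSet_Iic, hmap₁, gaussianReal_Iic _ hVpos,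
        hsqrtV]
      congr 1
      rw [hc, ← hnrsq]
      field_simp
      ring
    have hbval : stdNormalCDF (t - nr/σ) = 1 - stdNormalCDF (nr/σ - t) := by
      rw [show t - nr/(σ:ℝ) = -(nr/σ - t) by ring, stdNormalCDF_neg]
    -- likelihood ratio
    set ℓ : Fin d → ℝ → ℝ := fun i y =>
      Real.exp (((y - xhat i)^2 - (y - xhat i + r i)^2) / (2 * ((σ^2 : ℝ≥0):ℝ))) with hℓ
    set L : (Fin d → ℝ) → ℝ := fun x => ∏ i, ℓ i (x i) with hL
    have hLpos : ∀ x, 0 < L x := fun x => Finset.prod_pos fun i _ => Real.exp_pos _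
    have hℓm : ∀ i, Measurable (ℓ i) := fun i => by rw [hℓ]; fun_prop
    have hLm : Measurable L := by
      rw [hL]
      exact Finset.measurable_prod _ fun i _ => (hℓm i).comp (measurable_pi_apply i)
    have hμ₁dens : μ₁ = μ₀.withDensity (fun x => ENNReal.ofReal (L x)) := by
      have hcoord : ∀ i, gaussianReal (xhat i - r i) (σ^2)
          = (gaussianReal (xhat i) (σ^2)).withDensity
            (fun y => ENNReal.ofReal (ℓ i y)) :=
        fun i => gaussianReal_sub_eq_withDensity (xhat i) (r i) hσ2
      rw [hμ₁def, hμ₀def]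
      calc Measure.pi (fun i => gaussianReal (xhat i - r i) (σ^2))
          = Measure.pi (fun i => (gaussianReal (xhat i) (σ^2)).withDensity
              (fun y => ENNReal.ofReal (ℓ i y))) := by
            congr 1
            exact funext hcoord
        _ = (Measure.pi fun i => gaussianReal (xhat i) (σ^2)).withDensity
              (fun x => ∏ i, ENNReal.ofReal (ℓ i (x i))) := by
            haveI : ∀ i, SigmaFinite ((gaussianReal (xhat i) (σ^2)).withDensity
                (fun y => ENNReal.ofReal (ℓ i y))) := fun i => by
              rw [← hcoord i]; infer_instance
            exact pi_withDensity _ _ (fun i => (hℓm i).ennreal_ofReal)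
        _ = _ := by
            congr 1
            funext x
            rw [hL, ENNReal.ofReal_prod_of_nonneg (fun i _ => (Real.exp_pos _).le)]
    have hInt : ∀ φ : (Fin d → ℝ) → ℝ, ∫ x, φ x ∂μ₁ = ∫ x, L x * φ x ∂μ₀ := by
      intro φ
      rw [hμ₁dens]
      have hdeq : (fun x => ENNReal.ofReal (L x))
          = fun x => ((Real.toNNReal (L x) : ℝ≥0) : ℝ≥0∞) := rfl
      rw [hdeq, integral_withDensity_eq_integral_smul hLm.real_toNNReal φ]
      congr 1
      funext x
      rw [NNReal.smul_def, smul_eq_mul, Real.coe_toNNReal _ (hLpos x).le]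
    set k := Real.exp ((2*t*(σ:ℝ)*nr - ∑ i, (r i)^2) / (2*(σ:ℝ)^2)) with hk
    have hkpos : 0 < k := Real.exp_pos _
    have hsum_exp : ∀ x, L x = Real.exp
        ((∑ i, ((x i - xhat i)^2 - (x i - xhat i + r i)^2)) / (2*(σ:ℝ)^2)) := by
      intro x
      rw [hL]
      calc ∏ i, ℓ i (x i)
          = ∏ i, Real.exp (((x i - xhat i)^2 - (x i - xhat i + r i)^2) / (2*(σ:ℝ)^2)) := by
            refine Finset.prod_congr rfl fun i _ => ?_
            rw [hℓ]
            push_cast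
            ring_nf
        _ = Real.exp (∑ i, ((x i - xhat i)^2 - (x i - xhat i + r i)^2) / (2*(σ:ℝ)^2)) :=
            (Real.exp_sum _ _).symm
        _ = _ := by rw [Finset.sum_div]
    have hA : ∀ x, ∑ i, ((x i - xhat i)^2 - (x i - xhat i + r i)^2)
        = -2*(T x - M) - ∑ i, (r i)^2 := by
      intro x
      have e1 : ∑ i, ((x i - xhat i)^2 - (x i - xhat i + r i)^2)
          = ∑ i, ((-2)*(r i * x i) + (2*(r i * xhat i) + (-1)*(r i)^2)) :=
        Finset.sum_congr rfl fun i _ => by ring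
      rw [e1, Finset.sum_add_distrib, Finset.sum_add_distrib, ← Finset.mul_sum,
        ← Finset.mul_sum, ← Finset.mul_sum, hT, hM]
      ring
    have hdenpos : (0:ℝ) < 2*(σ:ℝ)^2 := by positivity
    have hSL : ∀ x, x ∈ S ↔ k ≤ L x := by
      intro x
      rw [hsum_exp x, hk, Real.exp_le_exp, div_le_div_iff_of_pos_right hdenpos, hA x]
      constructor
      · intro hx
        have : T x ≤ c := hx
        rw [hc] at this
        linarith
      · intro hx
        have : T x ≤ c := by rw [hc]; linarith
        exact this
    have hLint : Integrable L μ₀ := by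
      refine ⟨hLm.aestronglyMeasurable, ?_⟩
      rw [HasFiniteIntegral]
      have hnorm : ∀ x, ‖L x‖ₑ = ENNReal.ofReal (L x) :=
        fun x => Real.enorm_eq_ofReal (hLpos x).le
      simp_rw [hnorm]
      have huniv : ∫⁻ x, ENNReal.ofReal (L x) ∂μ₀ = μ₁ Set.univ := by
        rw [hμ₁dens, withDensity_apply _ MeasurableSet.univ, Measure.restrict_univ]
      rw [huniv, measure_univ]
      exact ENNReal.one_lt_top
    set χ : (Fin d → ℝ) → ℝ := S.indicator (fun _ => (1:ℝ)) with hχ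
    have hχm : Measurable χ := measurable_const.indicator hSm
    have hχb : ∀ x, 0 ≤ χ x ∧ χ x ≤ 1 := by
      intro x
      rw [hχ]
      by_cases hx : x ∈ S <;> simp [hx]
    have hχ₀ : ∫ x, χ x ∂μ₀ = (μ₀ S).toReal := by
      rw [hχ]
      exact integral_indicator_one hSm
    have hχ₁ : ∫ x, χ x ∂μ₁ = (μ₁ S).toReal := by
      rw [hχ]
      exact integral_indicator_one hSm
    have hLbd : ∀ (φ : (Fin d → ℝ) → ℝ), Measurable φ → (∀ x, 0 ≤ φ x ∧ φ x ≤ 1) →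
        Integrable (fun x => L x * φ x) μ₀ := by
      intro φ hm hb
      refine hLint.mono' (hLm.mul hm).aestronglyMeasurable (ae_of_all _ fun x => ?_)
      rw [Real.norm_eq_abs, abs_mul, abs_of_pos (hLpos x),
        abs_of_nonneg (hb x).1]
      calc L x * φ x ≤ L x * 1 := by
            exact mul_le_mul_of_nonneg_left (hb x).2 (hLpos x).le
        _ = L x := mul_one _
    -- Neyman--Pearson bound
    have hNP : ∀ φ : (Fin d → ℝ) → ℝ, Measurable φ → (∀ x, 0 ≤ φ x ∧ φ x ≤ 1) →
        ∫ x, φ x ∂μ₀ ≤ 1 - stdNormalCDF t →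
        stdNormalCDF (t - nr/σ) ≤ ∫ x, (1 - φ x) ∂μ₁ := by
      intro φ hφm hφb hφα
      have hφint₀ : Integrable φ μ₀ := integrable_of_bounded_meas hφm hφb
      have hφint₁ : Integrable φ μ₁ := integrable_of_bounded_meas hφm hφb
      have hLφint : Integrable (fun x => L x * φ x) μ₀ := hLbd φ hφm hφb
      have hLχint : Integrable (fun x => L x * χ x) μ₀ := hLbd χ hχm hχb
      have hχint : Integrable χ μ₀ := integrable_of_bounded_meas hχm hχb
      have hnn : 0 ≤ ∫ x, (χ x - φ x) * (L x - k) ∂μ₀ := by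
        refine integral_nonneg fun x => ?_
        show (0:ℝ) ≤ (χ x - φ x) * (L x - k)
        by_cases hx : x ∈ S
        · have h1 : φ x ≤ χ x := by rw [hχ, Set.indicator_of_mem hx]; exact (hφb x).2
          have h2 : k ≤ L x := (hSL x).1 hx
          exact mul_nonneg (by linarith) (by linarith)
        · have h1 : χ x ≤ φ x := by rw [hχ, Set.indicator_of_notMem hx]; exact (hφb x).1
          have h2 : L x ≤ k := le_of_lt (not_le.1 fun h => hx ((hSL x).2 h))
          nlinarith [mul_nonneg (by linarith : (0:ℝ) ≤ φ x - χ x)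
            (by linarith : (0:ℝ) ≤ k - L x)]
      have hexpand : ∫ x, (χ x - φ x) * (L x - k) ∂μ₀
          = (∫ x, L x * χ x ∂μ₀ - ∫ x, L x * φ x ∂μ₀)
            - (k * ∫ x, χ x ∂μ₀ - k * ∫ x, φ x ∂μ₀) := by
        rw [integral_congr_ae (g := fun x => (L x * χ x - L x * φ x) - (k * χ x - k * φ x))
          (ae_of_all _ fun x => by ring)]
        have e1 : Integrable (fun x => L x * χ x - L x * φ x) μ₀ := hLχint.sub hLφint
        have e2 : Integrable (fun x => k * χ x - k * φ x) μ₀ :=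
          (hχint.const_mul k).sub (hφint₀.const_mul k)
        rw [integral_sub e1 e2,
          integral_sub hLχint hLφint,
          integral_sub (hχint.const_mul k) (hφint₀.const_mul k),
          MeasureTheory.integral_const_mul, MeasureTheory.integral_const_mul]
      have hLχ : ∫ x, L x * χ x ∂μ₀ = (μ₁ S).toReal := by rw [← hInt χ, hχ₁]
      have hkterm : 0 ≤ k * ∫ x, χ x ∂μ₀ - k * ∫ x, φ x ∂μ₀ := by
        have : ∫ x, φ x ∂μ₀ ≤ ∫ x, χ x ∂μ₀ := by rw [hχ₀, hS₀]; exact hφα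
        nlinarith
      have hfinal : ∫ x, L x * φ x ∂μ₀ ≤ (μ₁ S).toReal := by
        rw [hexpand] at hnn
        linarith [hLχ ▸ hnn]
      have heq1 : ∫ x, (1 - φ x) ∂μ₁ = 1 - ∫ x, φ x ∂μ₁ := by
        rw [integral_sub (integrable_const 1) hφint₁, integral_const, probReal_univ]
        simp
      rw [heq1, hInt φ, hbval, ← hS₁]
      linarith
    refine beta2Star_eq _ _ _ _ χ hχm hχb ?_ ?_ hNP
    · rw [hχ₀, hS₀]
    · have heq1 : ∫ x, (1 - χ x) ∂μ₁ = 1 - ∫ x, χ x ∂μ₁ := by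
        rw [integral_sub (integrable_const 1) (integrable_of_bounded_meas hχm hχb),
          integral_const, probReal_univ]
        simp
      rw [heq1, hχ₁, hS₁, hbval]
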